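/- Let r, c ∈ Δ^n and π ∈ R_{+}^{n×n}. The rounding procedure Round(π, r, c) — which scales rows by x_i = min{r_i/r(π)_i, 1}, then columns by y_j = min{c_j/c(π')_j, 1}, and finally adds the rank-one correction ‖δ_r‖₁^{−1} δ_r δ_cᵀ where δ_r = r − r(π''), δ_c = c − c(π'') — outputs a matrix π̃ ∈ Π(r,c) satisfying ‖π − π̃‖₁ ≤ 2(‖r(π) − r‖₁ + ‖c(π) − c‖₁). -/

import Mathlib

noncomputable def rowSum {n : ℕ} (π : Fin n → Fin n → ℝ) (i : Fin n) : ℝ := ∑ j, π i j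
noncomputable def colSum {n : ℕ} (π : Fin n → Fin n → ℝ) (j : Fin n) : ℝ := ∑ i, π i j

/-- The Altschuler–Weed–Rigollet rounding procedure. -/
noncomputable def roundPlan {n : ℕ} (π : Fin n → Fin n → ℝ) (r c : Fin n → ℝ) :
    Fin n → Fin n → ℝ :=
  let π' : Fin n → Fin n → ℝ := fun i j => min (r i / rowSum π i) 1 * π i j
  let π'' : Fin n → Fin n → ℝ := fun i j => π' i j * min (c j / colSum π' j) 1
  let δr : Fin n → ℝ := fun i => r i - rowSum π'' i
  let δc : Fin n → ℝ := fun j => c j - colSum π'' j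
  fun i j => π'' i j + (∑ i', |δr i'|)⁻¹ * δr i * δc j

section AWRAux

variable {n : ℕ}

noncomputable def P1 (π : Fin n → Fin n → ℝ) (r : Fin n → ℝ) : Fin n → Fin n → ℝ :=
  fun i j => min (r i / rowSum π i) 1 * π i j

noncomputable def P2 (π : Fin n → Fin n → ℝ) (r c : Fin n → ℝ) : Fin n → Fin n → ℝ :=
  fun i j => P1 π r i j * min (c j / colSum (P1 π r) j) 1

noncomputable def Dr (π : Fin n → Fin n → ℝ) (r c : Fin n → ℝ) (i : Fin n) : ℝ :=
  r i - rowSum (P2 π r c) i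

noncomputable def Dc (π : Fin n → Fin n → ℝ) (r c : Fin n → ℝ) (j : Fin n) : ℝ :=
  c j - colSum (P2 π r c) j

lemma roundPlan_eq (π : Fin n → Fin n → ℝ) (r c : Fin n → ℝ) :
    roundPlan π r c = fun i j =>
      P2 π r c i j + (∑ i', |Dr π r c i'|)⁻¹ * Dr π r c i * Dc π r c j := rfl

lemma min_div_mul (a S : ℝ) (ha : 0 ≤ a) (hS : 0 ≤ S) :
    min (a / S) 1 * S = min a S := by
  rcases hS.eq_or_lt with h | h
  · simp [← h, min_eq_right ha]
  · rcases le_total a S with hle | hle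
    · rw [min_eq_left ((div_le_one h).mpr hle), div_mul_cancel₀ _ h.ne', min_eq_left hle]
    · rw [min_eq_right ((one_le_div h).mpr hle), one_mul, min_eq_right hle]

lemma sum_row_eq_sum_col (A : Fin n → Fin n → ℝ) :
    ∑ i, rowSum A i = ∑ j, colSum A j := by
  simp only [rowSum, colSum]; exact Finset.sum_comm

end AWRAux

/-- Rounding lemma (Altschuler–Weed–Rigollet): `roundPlan π r c` is a coupling of
`(r, c)` and is ℓ1-close to `π`. -/
theorem stmt_8 (n : ℕ) (π : Fin n → Fin n → ℝ) (hπ : ∀ i j, 0 ≤ π i j)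
    (r c : Fin n → ℝ) (hr0 : ∀ i, 0 ≤ r i) (hr1 : ∑ i, r i = 1)
    (hc0 : ∀ j, 0 ≤ c j) (hc1 : ∑ j, c j = 1) :
    (∀ i j, 0 ≤ roundPlan π r c i j) ∧
    (∀ i, rowSum (roundPlan π r c) i = r i) ∧
    (∀ j, colSum (roundPlan π r c) j = c j) ∧
    (∑ i, ∑ j, |π i j - roundPlan π r c i j|) ≤
      2 * ((∑ i, |rowSum π i - r i|) + ∑ j, |colSum π j - c j|) := by
  classical
  have hπS : ∀ i, 0 ≤ rowSum π i := fun i => Finset.sum_nonneg fun j _ => hπ i j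
  have h10 : ∀ i j, 0 ≤ P1 π r i j := fun i j =>
    mul_nonneg (le_min (div_nonneg (hr0 i) (hπS i)) zero_le_one) (hπ i j)
  have h1le : ∀ i j, P1 π r i j ≤ π i j := fun i j => by
    simpa [P1] using mul_le_mul_of_nonneg_right (min_le_right (r i / rowSum π i) 1) (hπ i j)
  have hc1S : ∀ j, 0 ≤ colSum (P1 π r) j := fun j => Finset.sum_nonneg fun i _ => h10 i j
  have h20 : ∀ i j, 0 ≤ P2 π r c i j := fun i j =>
    mul_nonneg (h10 i j) (le_min (div_nonneg (hc0 j) (hc1S j)) zero_le_one)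
  have h2le : ∀ i j, P2 π r c i j ≤ P1 π r i j := fun i j => by
    simpa [P2] using mul_le_mul_of_nonneg_left (min_le_right (c j / colSum (P1 π r) j) 1) (h10 i j)
  have hrow1 : ∀ i, rowSum (P1 π r) i = min (r i) (rowSum π i) := by
    intro i
    rw [rowSum]; simp only [P1]
    rw [← Finset.mul_sum]
    exact min_div_mul _ _ (hr0 i) (hπS i)
  have hcol2 : ∀ j, colSum (P2 π r c) j = min (c j) (colSum (P1 π r) j) := by
    intro j
    rw [colSum]; simp only [P2]
    rw [← Finset.sum_mul, mul_comm]
    exact min_div_mul _ _ (hc0 j) (hc1S j)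
  have hrow2le : ∀ i, rowSum (P2 π r c) i ≤ rowSum (P1 π r) i := fun i =>
    Finset.sum_le_sum fun j _ => h2le i j
  have hcol1le : ∀ j, colSum (P1 π r) j ≤ colSum π j := fun j =>
    Finset.sum_le_sum fun i _ => h1le i j
  have hrow2 : ∀ i, rowSum (P2 π r c) i ≤ r i := fun i =>
    (hrow2le i).trans ((hrow1 i) ▸ min_le_left _ _)
  have hdr0 : ∀ i, 0 ≤ Dr π r c i := fun i => sub_nonneg.mpr (hrow2 i)
  have hdc0 : ∀ j, 0 ≤ Dc π r c j := fun j =>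
    sub_nonneg.mpr ((hcol2 j) ▸ min_le_left _ _)
  -- sums of deficiencies
  have hsr : ∑ i, Dr π r c i = 1 - ∑ i, rowSum (P2 π r c) i := by
    simp only [Dr]
    rw [Finset.sum_sub_distrib, hr1]
  have hsc : ∑ j, Dc π r c j = 1 - ∑ i, rowSum (P2 π r c) i := by
    simp only [Dc]
    rw [Finset.sum_sub_distrib, hc1, sum_row_eq_sum_col]
  set s := ∑ i', |Dr π r c i'| with hs_def
  have hs0 : 0 ≤ s := Finset.sum_nonneg fun i _ => abs_nonneg _
  have hsr' : ∑ i, Dr π r c i = s :=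
    (Finset.sum_congr rfl fun i _ => (abs_of_nonneg (hdr0 i)).symm)
  have hsc' : ∑ j, Dc π r c j = s := by rw [hsc, ← hsr, hsr']
  have hdr_zero : s = 0 → ∀ i, Dr π r c i = 0 := fun h i =>
    (Finset.sum_eq_zero_iff_of_nonneg (fun i _ => hdr0 i)).mp (hsr'.trans h) i (Finset.mem_univ i)
  have hdc_zero : s = 0 → ∀ j, Dc π r c j = 0 := fun h j =>
    (Finset.sum_eq_zero_iff_of_nonneg (fun j _ => hdc0 j)).mp (hsc'.trans h) j (Finset.mem_univ j)
  have hcancel_r : ∀ i, s⁻¹ * Dr π r c i * s = Dr π r c i := by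
    intro i
    rcases eq_or_ne s 0 with h | h
    · simp [h, hdr_zero h i]
    · rw [mul_comm s⁻¹, mul_assoc, inv_mul_cancel₀ h, mul_one]
  have hcancel_c : ∀ j, s⁻¹ * s * Dc π r c j = Dc π r c j := by
    intro j
    rcases eq_or_ne s 0 with h | h
    · simp [h, hdc_zero h j]
    · rw [inv_mul_cancel₀ h, one_mul]
  refine ⟨?_, ?_, ?_, ?_⟩
  · intro i j
    rw [roundPlan_eq, ← hs_def]
    exact add_nonneg (h20 i j)
      (mul_nonneg (mul_nonneg (inv_nonneg.mpr hs0) (hdr0 i)) (hdc0 j))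
  · intro i
    rw [roundPlan_eq, ← hs_def, rowSum]
    rw [Finset.sum_add_distrib, ← Finset.mul_sum, hsc', hcancel_r]
    simp only [Dr, rowSum]
    ring
  · intro j
    rw [roundPlan_eq, ← hs_def, colSum]
    rw [Finset.sum_add_distrib, ← Finset.sum_mul, ← Finset.mul_sum, hsr', hcancel_c]
    simp only [Dc, colSum]
    ring
  · rw [roundPlan_eq, ← hs_def]
    have h2leπ : ∀ i j, P2 π r c i j ≤ π i j := fun i j => (h2le i j).trans (h1le i j)
    have hterm : ∀ i j, |π i j - (P2 π r c i j + s⁻¹ * Dr π r c i * Dc π r c j)| ≤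
        (π i j - P2 π r c i j) + s⁻¹ * Dr π r c i * Dc π r c j := by
      intro i j
      have h1 := h2leπ i j
      have h2 : 0 ≤ s⁻¹ * Dr π r c i * Dc π r c j :=
        mul_nonneg (mul_nonneg (inv_nonneg.mpr hs0) (hdr0 i)) (hdc0 j)
      rw [abs_le]
      constructor <;> linarith
    have hsum_corr : ∑ i, ∑ j, s⁻¹ * Dr π r c i * Dc π r c j = s := by
      have hrowc : ∀ i, ∑ j, s⁻¹ * Dr π r c i * Dc π r c j = Dr π r c i := fun i => by
        rw [← Finset.mul_sum, hsc', hcancel_r]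
      simp only [hrowc]
      exact hsr'
    have hstep1 : (∑ i, ∑ j, |π i j - (P2 π r c i j + s⁻¹ * Dr π r c i * Dc π r c j)|) ≤
        (∑ i, rowSum π i - ∑ i, rowSum (P2 π r c) i) + s := by
      calc (∑ i, ∑ j, |π i j - (P2 π r c i j + s⁻¹ * Dr π r c i * Dc π r c j)|)
          ≤ ∑ i, ∑ j, ((π i j - P2 π r c i j) + s⁻¹ * Dr π r c i * Dc π r c j) :=
            Finset.sum_le_sum fun i _ => Finset.sum_le_sum fun j _ => hterm i j
        _ = (∑ i, ∑ j, (π i j - P2 π r c i j)) + s := by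
            simp only [Finset.sum_add_distrib, hsum_corr]
        _ = (∑ i, rowSum π i - ∑ i, rowSum (P2 π r c) i) + s := by
            simp only [Finset.sum_sub_distrib, rowSum]
    -- per-row comparison with the target A
    have hDi : ∀ i, rowSum π i - rowSum (P1 π r) i ≤ |rowSum π i - r i| := by
      intro i
      rw [hrow1 i]
      rcases le_total (r i) (rowSum π i) with h | h
      · rw [min_eq_left h]; exact le_abs_self _
      · rw [min_eq_right h]; simp
    have hD : ∑ i, rowSum π i - ∑ i, rowSum (P1 π r) i ≤ ∑ i, |rowSum π i - r i| := by
      rw [← Finset.sum_sub_distrib]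
      exact Finset.sum_le_sum fun i _ => hDi i
    -- per-column key inequality
    have hj : ∀ j, (colSum (P1 π r) j - colSum (P2 π r c) j) + (c j - colSum (P2 π r c) j) ≤
        |colSum π j - c j| + (colSum π j - colSum (P1 π r) j) := by
      intro j
      have h1 := hcol2 j
      have h2 := hcol1le j
      have h3 := le_abs_self (colSum π j - c j)
      have h4 := neg_le_abs (colSum π j - c j)
      rcases le_total (c j) (colSum (P1 π r) j) with h | h
      · rw [h1, min_eq_left h]; linarith
      · rw [h1, min_eq_right h]; linarith
    have hcol_key : (∑ j, colSum (P1 π r) j - ∑ j, colSum (P2 π r c) j) +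
        (1 - ∑ j, colSum (P2 π r c) j) ≤
        (∑ j, |colSum π j - c j|) + (∑ j, colSum π j - ∑ j, colSum (P1 π r) j) := by
      have := Finset.sum_le_sum fun j (_ : j ∈ Finset.univ) => hj j
      simp only [Finset.sum_add_distrib, Finset.sum_sub_distrib, hc1] at this
      linarith
    -- convert column totals to row totals
    have e1 : ∑ j, colSum (P1 π r) j = ∑ i, rowSum (P1 π r) i :=
      (sum_row_eq_sum_col (P1 π r)).symm
    have e2 : ∑ j, colSum (P2 π r c) j = ∑ i, rowSum (P2 π r c) i :=
      (sum_row_eq_sum_col (P2 π r c)).symm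
    have e3 : ∑ j, colSum π j = ∑ i, rowSum π i := (sum_row_eq_sum_col π).symm
    rw [e1, e2, e3] at hcol_key
    have hs_eq : s = 1 - ∑ i, rowSum (P2 π r c) i := by rw [← hsr', hsr]
    have hB0 : 0 ≤ ∑ j, |colSum π j - c j| := Finset.sum_nonneg fun j _ => abs_nonneg _
    linarith
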